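/- Let N ≥ 1, l_1,…,l_N positive reals summing to 1, g > 0, z_b ∈ C¹(ℝ²), and let h and 𝐮_α = (u_α, v_α) (α = 1,…,N) be C¹ on an open set Ω ⊂ ℝ_t × ℝ²_{x,y}. Set h_α = l_α h, G_{α+1/2} = − Σ_{j=1}^N ( Σ_{p=1}^α l_p − 𝟙_{j ≤ α} ) ∇_{x,y}·(h_j 𝐮_j) for 0 ≤ α ≤ N (so G_{1/2} = G_{N+1/2} = 0), and define the centered interface velocities 𝐮_{α+1/2} := (𝐮_α + 𝐮_{α+1})/2 for 1 ≤ α ≤ N−1. Assume on Ω the total mass equation ∂_t h + Σ_α ∇_{x,y}·(h_α 𝐮_α) = 0 and, for each α, the layer momentum equation ∂_t(h_α 𝐮_α) + ∇_{x,y}·(h_α 𝐮_α ⊗ 𝐮_α) + ∇_{x,y}((g/2) h h_α) = − g h_α ∇_{x,y} z_b + 𝐮_{α+1/2} G_{α+1/2} − 𝐮_{α−1/2} G_{α−1/2}. Then, with E_α := h_α|𝐮_α|²/2 + (g/2) h_α h + g h_α z_b, the total energy is exactly conserved on Ω: ∂_t Σ_{α=1}^N E_α + ∇_{x,y}· Σ_{α=1}^N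 𝐮_α ( E_α + (g/2) h_α h ) = 0. -/

import Mathlib

open MeasureTheory

/-- Partial derivative in time `t` of a function of `(t, x, y)`. -/
noncomputable def pt (f : ℝ × ℝ × ℝ → ℝ) (q : ℝ × ℝ × ℝ) : ℝ :=
  deriv (fun s => f (s, q.2.1, q.2.2)) q.1

/-- Partial derivative in `x` of a function of `(t, x, y)`. -/
noncomputable def px (f : ℝ × ℝ × ℝ → ℝ) (q : ℝ × ℝ × ℝ) : ℝ :=
  deriv (fun s => f (q.1, s, q.2.2)) q.2.1

/-- Partial derivative in `y` of a function of `(t, x, y)`. -/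
noncomputable def py (f : ℝ × ℝ × ℝ → ℝ) (q : ℝ × ℝ × ℝ) : ℝ :=
  deriv (fun s => f (q.1, q.2.1, s)) q.2.2

/-- Horizontal divergence `∇_{x,y}·F` of a horizontal vector field. -/
noncomputable def hdiv (F : ℝ × ℝ × ℝ → ℝ × ℝ) (q : ℝ × ℝ × ℝ) : ℝ :=
  px (fun p => (F p).1) q + py (fun p => (F p).2) q

private theorem SWE_deriv_eq {g f : ℝ → ℝ} {d d' x : ℝ} (hg : HasDerivAt g d x)
    (hfg : ∀ s, f s = g s) (hd : d' = d) : deriv f x = d' := by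
  rw [funext hfg, hd]; exact hg.deriv

private theorem SWE_hasDerivAt_congr {g f : ℝ → ℝ} {d d' x : ℝ} (hg : HasDerivAt g d x)
    (hfg : ∀ s, f s = g s) (hd : d' = d) : HasDerivAt f d' x := by
  rw [funext hfg, hd]; exact hg

private theorem SWE_telescope (f : ℕ → ℝ) (N : ℕ) :
    ∑ α ∈ Finset.Icc 1 N, (f α - f (α - 1)) = f N - f 0 := by
  induction N with
  | zero => simp
  | succ n ih =>
    rw [Finset.sum_Icc_succ_top (by omega : 1 ≤ n + 1), ih]
    simp only [Nat.add_sub_cancel]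
    ring

theorem stmt2
    (N : ℕ) (hN : 1 ≤ N) (g : ℝ) (hg : 0 < g)
    (l : ℕ → ℝ) (hl : ∀ j ∈ Finset.Icc 1 N, 0 < l j)
    (hlsum : ∑ j ∈ Finset.Icc 1 N, l j = 1)
    (zb : ℝ × ℝ → ℝ) (hzbC1 : ContDiff ℝ 1 zb)
    (Ω : Set (ℝ × ℝ × ℝ)) (hΩ : IsOpen Ω)
    (h : ℝ × ℝ × ℝ → ℝ) (hhC1 : ContDiffOn ℝ 1 h Ω)
    (u : ℕ → ℝ × ℝ × ℝ → ℝ × ℝ)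
    (huC1 : ∀ j ∈ Finset.Icc 1 N, ContDiffOn ℝ 1 (u j) Ω)
    (hlay : ℕ → ℝ × ℝ × ℝ → ℝ)
    (hlay_def : ∀ j q, hlay j q = l j * h q)
    (G : ℕ → ℝ × ℝ × ℝ → ℝ)
    (hG : ∀ α q, G α q = -∑ j ∈ Finset.Icc 1 N,
        ((∑ p ∈ Finset.Icc 1 α, l p) - (if j ≤ α then (1 : ℝ) else 0)) *
          hdiv (fun p => hlay j p • u j p) q)
    (uh : ℕ → ℝ × ℝ × ℝ → ℝ × ℝ)
    (huh : ∀ α ∈ Finset.Icc 1 (N - 1), ∀ q,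
      uh α q = (2 : ℝ)⁻¹ • (u α q + u (α + 1) q))
    (hmass : ∀ q ∈ Ω,
      pt h q + ∑ j ∈ Finset.Icc 1 N, hdiv (fun p => hlay j p • u j p) q = 0)
    (hmom1 : ∀ α ∈ Finset.Icc 1 N, ∀ q ∈ Ω,
      pt (fun p => hlay α p * (u α p).1) q
        + px (fun p => hlay α p * (u α p).1 * (u α p).1) q
        + py (fun p => hlay α p * (u α p).2 * (u α p).1) q
        + px (fun p => g / 2 * h p * hlay α p) q
      = -(g * hlay α q * px (fun p => zb (p.2.1, p.2.2)) q)
        + (uh α q).1 * G α q - (uh (α - 1) q).1 * G (α - 1) q)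
    (hmom2 : ∀ α ∈ Finset.Icc 1 N, ∀ q ∈ Ω,
      pt (fun p => hlay α p * (u α p).2) q
        + px (fun p => hlay α p * (u α p).1 * (u α p).2) q
        + py (fun p => hlay α p * (u α p).2 * (u α p).2) q
        + py (fun p => g / 2 * h p * hlay α p) q
      = -(g * hlay α q * py (fun p => zb (p.2.1, p.2.2)) q)
        + (uh α q).2 * G α q - (uh (α - 1) q).2 * G (α - 1) q)
    (E : ℕ → ℝ × ℝ × ℝ → ℝ)
    (hE : ∀ α q, E α q = hlay α q * ((u α q).1 ^ 2 + (u α q).2 ^ 2) / 2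
        + g / 2 * hlay α q * h q + g * hlay α q * zb (q.2.1, q.2.2)) :
    ∀ q ∈ Ω,
      pt (fun p => ∑ α ∈ Finset.Icc 1 N, E α p) q
        + hdiv (fun p => ∑ α ∈ Finset.Icc 1 N,
            (E α p + g / 2 * hlay α p * h p) • u α p) q
      = 0 := by
  intro q hq
  obtain ⟨t, x, y⟩ := q
  have hmem := hΩ.mem_nhds hq
  have Dh : DifferentiableAt ℝ h (t, x, y) := (hhC1.differentiableOn one_ne_zero).differentiableAt hmem
  have hHt : HasDerivAt (fun s => h (s, x, y)) (pt h (t, x, y)) t := by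
    have : DifferentiableAt ℝ (fun s : ℝ => h (s, x, y)) t :=
      Dh.comp t (differentiableAt_fun_id.prodMk (differentiableAt_const _))
    exact this.hasDerivAt
  have hHx : HasDerivAt (fun s => h (t, s, y)) (px h (t, x, y)) x := by
    have : DifferentiableAt ℝ (fun s : ℝ => h (t, s, y)) x :=
      Dh.comp x ((differentiableAt_const _).prodMk (differentiableAt_fun_id.prodMk (differentiableAt_const _)))
    exact this.hasDerivAt
  have hHy : HasDerivAt (fun s => h (t, x, s)) (py h (t, x, y)) y := by
    have : DifferentiableAt ℝ (fun s : ℝ => h (t, x, s)) y :=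
      Dh.comp y ((differentiableAt_const _).prodMk ((differentiableAt_const _).prodMk differentiableAt_fun_id))
    exact this.hasDerivAt
  have hU1t : ∀ j ∈ Finset.Icc 1 N, HasDerivAt (fun s => (u j (s, x, y)).1) (pt (fun p => (u j p).1) (t, x, y)) t := by
    intro j hj
    have : DifferentiableAt ℝ (fun s : ℝ => (u j (s, x, y)).1) t :=
      by have := (((huC1 j hj).differentiableOn one_ne_zero).differentiableAt hmem).fst.comp (f := fun s : ℝ => (s, x, y)) t (differentiableAt_fun_id.prodMk (differentiableAt_const _)); exact this
    exact this.hasDerivAt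
  have hU1x : ∀ j ∈ Finset.Icc 1 N, HasDerivAt (fun s => (u j (t, s, y)).1) (px (fun p => (u j p).1) (t, x, y)) x := by
    intro j hj
    have : DifferentiableAt ℝ (fun s : ℝ => (u j (t, s, y)).1) x :=
      by have := (((huC1 j hj).differentiableOn one_ne_zero).differentiableAt hmem).fst.comp (f := fun s : ℝ => (t, s, y)) x ((differentiableAt_const _).prodMk (differentiableAt_fun_id.prodMk (differentiableAt_const _))); exact this
    exact this.hasDerivAt
  have hU1y : ∀ j ∈ Finset.Icc 1 N, HasDerivAt (fun s => (u j (t, x, s)).1) (py (fun p => (u j p).1) (t, x, y)) y := by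
    intro j hj
    have : DifferentiableAt ℝ (fun s : ℝ => (u j (t, x, s)).1) y :=
      by have := (((huC1 j hj).differentiableOn one_ne_zero).differentiableAt hmem).fst.comp (f := fun s : ℝ => (t, x, s)) y ((differentiableAt_const _).prodMk ((differentiableAt_const _).prodMk differentiableAt_fun_id)); exact this
    exact this.hasDerivAt
  have hU2t : ∀ j ∈ Finset.Icc 1 N, HasDerivAt (fun s => (u j (s, x, y)).2) (pt (fun p => (u j p).2) (t, x, y)) t := by
    intro j hj
    have : DifferentiableAt ℝ (fun s : ℝ => (u j (s, x, y)).2) t :=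
      by have := (((huC1 j hj).differentiableOn one_ne_zero).differentiableAt hmem).snd.comp (f := fun s : ℝ => (s, x, y)) t (differentiableAt_fun_id.prodMk (differentiableAt_const _)); exact this
    exact this.hasDerivAt
  have hU2x : ∀ j ∈ Finset.Icc 1 N, HasDerivAt (fun s => (u j (t, s, y)).2) (px (fun p => (u j p).2) (t, x, y)) x := by
    intro j hj
    have : DifferentiableAt ℝ (fun s : ℝ => (u j (t, s, y)).2) x :=
      by have := (((huC1 j hj).differentiableOn one_ne_zero).differentiableAt hmem).snd.comp (f := fun s : ℝ => (t, s, y)) x ((differentiableAt_const _).prodMk (differentiableAt_fun_id.prodMk (differentiableAt_const _))); exact this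
    exact this.hasDerivAt
  have hU2y : ∀ j ∈ Finset.Icc 1 N, HasDerivAt (fun s => (u j (t, x, s)).2) (py (fun p => (u j p).2) (t, x, y)) y := by
    intro j hj
    have : DifferentiableAt ℝ (fun s : ℝ => (u j (t, x, s)).2) y :=
      by have := (((huC1 j hj).differentiableOn one_ne_zero).differentiableAt hmem).snd.comp (f := fun s : ℝ => (t, x, s)) y ((differentiableAt_const _).prodMk ((differentiableAt_const _).prodMk differentiableAt_fun_id)); exact this
    exact this.hasDerivAt
  have hZx : HasDerivAt (fun s => zb (s, y)) (px (fun p => zb (p.2.1, p.2.2)) (t, x, y)) x := by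
    have : DifferentiableAt ℝ (fun s : ℝ => zb (s, y)) x :=
      (hzbC1.differentiable one_ne_zero (x, y)).comp x (differentiableAt_fun_id.prodMk (differentiableAt_const _))
    exact this.hasDerivAt
  have hZy : HasDerivAt (fun s => zb (x, s)) (py (fun p => zb (p.2.1, p.2.2)) (t, x, y)) y := by
    have : DifferentiableAt ℝ (fun s : ℝ => zb (x, s)) y :=
      (hzbC1.differentiable one_ne_zero (x, y)).comp y ((differentiableAt_const _).prodMk differentiableAt_fun_id)
    exact this.hasDerivAt
  have c1 : ∀ α ∈ Finset.Icc 1 N, pt (fun p => hlay α p * (u α p).1) (t, x, y) = l α * (pt h (t, x, y) * (u α (t, x, y)).1 + h (t, x, y) * pt (fun p => (u α p).1) (t, x, y)) := by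
    intro α hα
    show deriv (fun s => hlay α (s, x, y) * (u α (s, x, y)).1) t = _
    exact SWE_deriv_eq (((hasDerivAt_const t (l α)).mul hHt).mul (hU1t α hα)) (fun s => by simp only [hE, hlay_def, Prod.smul_fst, Prod.smul_snd, smul_eq_mul, Pi.mul_apply, Pi.add_apply]; try ring) (by simp only [Pi.mul_apply, Pi.add_apply]; ring)
  have c5 : ∀ α ∈ Finset.Icc 1 N, pt (fun p => hlay α p * (u α p).2) (t, x, y) = l α * (pt h (t, x, y) * (u α (t, x, y)).2 + h (t, x, y) * pt (fun p => (u α p).2) (t, x, y)) := by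
    intro α hα
    show deriv (fun s => hlay α (s, x, y) * (u α (s, x, y)).2) t = _
    exact SWE_deriv_eq (((hasDerivAt_const t (l α)).mul hHt).mul (hU2t α hα)) (fun s => by simp only [hE, hlay_def, Prod.smul_fst, Prod.smul_snd, smul_eq_mul, Pi.mul_apply, Pi.add_apply]; try ring) (by simp only [Pi.mul_apply, Pi.add_apply]; ring)
  have c2 : ∀ α ∈ Finset.Icc 1 N, px (fun p => hlay α p * (u α p).1 * (u α p).1) (t, x, y) = l α * (px h (t, x, y) * (u α (t, x, y)).1 * (u α (t, x, y)).1 + h (t, x, y) * px (fun p => (u α p).1) (t, x, y) * (u α (t, x, y)).1 + h (t, x, y) * (u α (t, x, y)).1 * px (fun p => (u α p).1) (t, x, y)) := by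
    intro α hα
    show deriv (fun s => hlay α (t, s, y) * (u α (t, s, y)).1 * (u α (t, s, y)).1) x = _
    exact SWE_deriv_eq ((((hasDerivAt_const x (l α)).mul hHx).mul (hU1x α hα)).mul (hU1x α hα)) (fun s => by simp only [hE, hlay_def, Prod.smul_fst, Prod.smul_snd, smul_eq_mul, Pi.mul_apply, Pi.add_apply]; try ring) (by simp only [Pi.mul_apply, Pi.add_apply]; ring)
  have c3 : ∀ α ∈ Finset.Icc 1 N, py (fun p => hlay α p * (u α p).2 * (u α p).1) (t, x, y) = l α * (py h (t, x, y) * (u α (t, x, y)).2 * (u α (t, x, y)).1 + h (t, x, y) * py (fun p => (u α p).2) (t, x, y) * (u α (t, x, y)).1 + h (t, x, y) * (u α (t, x, y)).2 * py (fun p => (u α p).1) (t, x, y)) := by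
    intro α hα
    show deriv (fun s => hlay α (t, x, s) * (u α (t, x, s)).2 * (u α (t, x, s)).1) y = _
    exact SWE_deriv_eq ((((hasDerivAt_const y (l α)).mul hHy).mul (hU2y α hα)).mul (hU1y α hα)) (fun s => by simp only [hE, hlay_def, Prod.smul_fst, Prod.smul_snd, smul_eq_mul, Pi.mul_apply, Pi.add_apply]; try ring) (by simp only [Pi.mul_apply, Pi.add_apply]; ring)
  have c6 : ∀ α ∈ Finset.Icc 1 N, px (fun p => hlay α p * (u α p).1 * (u α p).2) (t, x, y) = l α * (px h (t, x, y) * (u α (t, x, y)).1 * (u α (t, x, y)).2 + h (t, x, y) * px (fun p => (u α p).1) (t, x, y) * (u α (t, x, y)).2 + h (t, x, y) * (u α (t, x, y)).1 * px (fun p => (u α p).2) (t, x, y)) := by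
    intro α hα
    show deriv (fun s => hlay α (t, s, y) * (u α (t, s, y)).1 * (u α (t, s, y)).2) x = _
    exact SWE_deriv_eq ((((hasDerivAt_const x (l α)).mul hHx).mul (hU1x α hα)).mul (hU2x α hα)) (fun s => by simp only [hE, hlay_def, Prod.smul_fst, Prod.smul_snd, smul_eq_mul, Pi.mul_apply, Pi.add_apply]; try ring) (by simp only [Pi.mul_apply, Pi.add_apply]; ring)
  have c7 : ∀ α ∈ Finset.Icc 1 N, py (fun p => hlay α p * (u α p).2 * (u α p).2) (t, x, y) = l α * (py h (t, x, y) * (u α (t, x, y)).2 * (u α (t, x, y)).2 + h (t, x, y) * py (fun p => (u α p).2) (t, x, y) * (u α (t, x, y)).2 + h (t, x, y) * (u α (t, x, y)).2 * py (fun p => (u α p).2) (t, x, y)) := by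
    intro α hα
    show deriv (fun s => hlay α (t, x, s) * (u α (t, x, s)).2 * (u α (t, x, s)).2) y = _
    exact SWE_deriv_eq ((((hasDerivAt_const y (l α)).mul hHy).mul (hU2y α hα)).mul (hU2y α hα)) (fun s => by simp only [hE, hlay_def, Prod.smul_fst, Prod.smul_snd, smul_eq_mul, Pi.mul_apply, Pi.add_apply]; try ring) (by simp only [Pi.mul_apply, Pi.add_apply]; ring)
  have c4 : ∀ α ∈ Finset.Icc 1 N, px (fun p => g / 2 * h p * hlay α p) (t, x, y) = g * l α * h (t, x, y) * px h (t, x, y) := by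
    intro α hα
    show deriv (fun s => g / 2 * h (t, s, y) * hlay α (t, s, y)) x = _
    exact SWE_deriv_eq (((hasDerivAt_const x (g / 2)).mul hHx).mul ((hasDerivAt_const x (l α)).mul hHx)) (fun s => by simp only [hE, hlay_def, Prod.smul_fst, Prod.smul_snd, smul_eq_mul, Pi.mul_apply, Pi.add_apply]; try ring) (by simp only [Pi.mul_apply, Pi.add_apply]; ring)
  have c8 : ∀ α ∈ Finset.Icc 1 N, py (fun p => g / 2 * h p * hlay α p) (t, x, y) = g * l α * h (t, x, y) * py h (t, x, y) := by
    intro α hα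
    show deriv (fun s => g / 2 * h (t, x, s) * hlay α (t, x, s)) y = _
    exact SWE_deriv_eq (((hasDerivAt_const y (g / 2)).mul hHy).mul ((hasDerivAt_const y (l α)).mul hHy)) (fun s => by simp only [hE, hlay_def, Prod.smul_fst, Prod.smul_snd, smul_eq_mul, Pi.mul_apply, Pi.add_apply]; try ring) (by simp only [Pi.mul_apply, Pi.add_apply]; ring)
  have cD : ∀ j ∈ Finset.Icc 1 N, hdiv (fun p => hlay j p • u j p) (t, x, y) = l j * (px h (t, x, y) * (u j (t, x, y)).1 + h (t, x, y) * px (fun p => (u j p).1) (t, x, y) + py h (t, x, y) * (u j (t, x, y)).2 + h (t, x, y) * py (fun p => (u j p).2) (t, x, y)) := by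
    intro j hj
    have e1 : deriv (fun s => (hlay j (t, s, y) • u j (t, s, y)).1) x
        = l j * (px h (t, x, y) * (u j (t, x, y)).1 + h (t, x, y) * px (fun p => (u j p).1) (t, x, y)) :=
      SWE_deriv_eq (((hasDerivAt_const x (l j)).mul hHx).mul (hU1x j hj)) (fun s => by simp only [hE, hlay_def, Prod.smul_fst, Prod.smul_snd, smul_eq_mul, Pi.mul_apply, Pi.add_apply]; try ring) (by simp only [Pi.mul_apply, Pi.add_apply]; ring)
    have e2 : deriv (fun s => (hlay j (t, x, s) • u j (t, x, s)).2) y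
        = l j * (py h (t, x, y) * (u j (t, x, y)).2 + h (t, x, y) * py (fun p => (u j p).2) (t, x, y)) :=
      SWE_deriv_eq (((hasDerivAt_const y (l j)).mul hHy).mul (hU2y j hj)) (fun s => by simp only [hE, hlay_def, Prod.smul_fst, Prod.smul_snd, smul_eq_mul, Pi.mul_apply, Pi.add_apply]; try ring) (by simp only [Pi.mul_apply, Pi.add_apply]; ring)
    show deriv (fun s => (hlay j (t, s, y) • u j (t, s, y)).1) x
        + deriv (fun s => (hlay j (t, x, s) • u j (t, x, s)).2) y = _
    rw [e1, e2]; ring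
  have HEt : ∀ α ∈ Finset.Icc 1 N, HasDerivAt (fun s => E α (s, x, y)) (l α * (pt h (t, x, y) * ((u α (t, x, y)).1 ^ 2 + (u α (t, x, y)).2 ^ 2) / 2 + h (t, x, y) * ((u α (t, x, y)).1 * pt (fun p => (u α p).1) (t, x, y) + (u α (t, x, y)).2 * pt (fun p => (u α p).2) (t, x, y))) + g * l α * h (t, x, y) * pt h (t, x, y) + g * l α * pt h (t, x, y) * zb (x, y)) t := by
    intro α hα
    have hb := (((((hasDerivAt_const t (l α)).mul hHt).mul (((hU1t α hα).mul (hU1t α hα)).add ((hU2t α hα).mul (hU2t α hα)))).div_const 2).add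
        ((((hasDerivAt_const t (g / 2)).mul ((hasDerivAt_const t (l α)).mul hHt)).mul hHt).add
          (((hasDerivAt_const t g).mul ((hasDerivAt_const t (l α)).mul hHt)).mul (hasDerivAt_const t (zb (x, y))))))
    exact SWE_hasDerivAt_congr hb (fun s => by simp only [hE, hlay_def, Prod.smul_fst, Prod.smul_snd, smul_eq_mul, Pi.mul_apply, Pi.add_apply]; try ring) (by simp only [Pi.mul_apply, Pi.add_apply]; ring)
  have HFx : ∀ α ∈ Finset.Icc 1 N, HasDerivAt
      (fun s => (E α (t, s, y) + g / 2 * hlay α (t, s, y) * h (t, s, y)) * (u α (t, s, y)).1)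
      ((l α * (px h (t, x, y) * ((u α (t, x, y)).1 ^ 2 + (u α (t, x, y)).2 ^ 2) / 2 + h (t, x, y) * ((u α (t, x, y)).1 * px (fun p => (u α p).1) (t, x, y) + (u α (t, x, y)).2 * px (fun p => (u α p).2) (t, x, y))) + 2 * g * l α * h (t, x, y) * px h (t, x, y) + g * l α * (px h (t, x, y) * zb (x, y) + h (t, x, y) * px (fun p => zb (p.2.1, p.2.2)) (t, x, y))) * (u α (t, x, y)).1 + (l α * h (t, x, y) * ((u α (t, x, y)).1 ^ 2 + (u α (t, x, y)).2 ^ 2) / 2 + g * l α * h (t, x, y) ^ 2 + g * l α * h (t, x, y) * zb (x, y)) * px (fun p => (u α p).1) (t, x, y)) x := by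
    intro α hα
    have hb := (((((((hasDerivAt_const x (l α)).mul hHx).mul (((hU1x α hα).mul (hU1x α hα)).add ((hU2x α hα).mul (hU2x α hα)))).div_const 2).add
        ((((hasDerivAt_const x (g / 2)).mul ((hasDerivAt_const x (l α)).mul hHx)).mul hHx).add
          (((hasDerivAt_const x g).mul ((hasDerivAt_const x (l α)).mul hHx)).mul hZx)))).add (((hasDerivAt_const x (g / 2)).mul ((hasDerivAt_const x (l α)).mul hHx)).mul hHx)).mul (hU1x α hα)
    exact SWE_hasDerivAt_congr hb (fun s => by simp only [hE, hlay_def, Prod.smul_fst, Prod.smul_snd, smul_eq_mul, Pi.mul_apply, Pi.add_apply]; try ring) (by simp only [Pi.mul_apply, Pi.add_apply]; ring)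
  have HFy : ∀ α ∈ Finset.Icc 1 N, HasDerivAt
      (fun s => (E α (t, x, s) + g / 2 * hlay α (t, x, s) * h (t, x, s)) * (u α (t, x, s)).2)
      ((l α * (py h (t, x, y) * ((u α (t, x, y)).1 ^ 2 + (u α (t, x, y)).2 ^ 2) / 2 + h (t, x, y) * ((u α (t, x, y)).1 * py (fun p => (u α p).1) (t, x, y) + (u α (t, x, y)).2 * py (fun p => (u α p).2) (t, x, y))) + 2 * g * l α * h (t, x, y) * py h (t, x, y) + g * l α * (py h (t, x, y) * zb (x, y) + h (t, x, y) * py (fun p => zb (p.2.1, p.2.2)) (t, x, y))) * (u α (t, x, y)).2 + (l α * h (t, x, y) * ((u α (t, x, y)).1 ^ 2 + (u α (t, x, y)).2 ^ 2) / 2 + g * l α * h (t, x, y) ^ 2 + g * l α * h (t, x, y) * zb (x, y)) * py (fun p => (u α p).2) (t, x, y)) y := by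
    intro α hα
    have hb := (((((((hasDerivAt_const y (l α)).mul hHy).mul (((hU1y α hα).mul (hU1y α hα)).add ((hU2y α hα).mul (hU2y α hα)))).div_const 2).add
        ((((hasDerivAt_const y (g / 2)).mul ((hasDerivAt_const y (l α)).mul hHy)).mul hHy).add
          (((hasDerivAt_const y g).mul ((hasDerivAt_const y (l α)).mul hHy)).mul hZy)))).add (((hasDerivAt_const y (g / 2)).mul ((hasDerivAt_const y (l α)).mul hHy)).mul hHy)).mul (hU2y α hα)
    exact SWE_hasDerivAt_congr hb (fun s => by simp only [hE, hlay_def, Prod.smul_fst, Prod.smul_snd, smul_eq_mul, Pi.mul_apply, Pi.add_apply]; try ring) (by simp only [Pi.mul_apply, Pi.add_apply]; ring)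
  have gt : pt (fun p => ∑ α ∈ Finset.Icc 1 N, E α p) (t, x, y) = ∑ α ∈ Finset.Icc 1 N, (l α * (pt h (t, x, y) * ((u α (t, x, y)).1 ^ 2 + (u α (t, x, y)).2 ^ 2) / 2 + h (t, x, y) * ((u α (t, x, y)).1 * pt (fun p => (u α p).1) (t, x, y) + (u α (t, x, y)).2 * pt (fun p => (u α p).2) (t, x, y))) + g * l α * h (t, x, y) * pt h (t, x, y) + g * l α * pt h (t, x, y) * zb (x, y)) := by
    show deriv (fun s => ∑ α ∈ Finset.Icc 1 N, E α (s, x, y)) t = _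
    exact (HasDerivAt.fun_sum (fun α hα => HEt α hα)).deriv
  have gx : px (fun p => ∑ α ∈ Finset.Icc 1 N, (E α p + g / 2 * hlay α p * h p) * (u α p).1) (t, x, y)
      = ∑ α ∈ Finset.Icc 1 N, ((l α * (px h (t, x, y) * ((u α (t, x, y)).1 ^ 2 + (u α (t, x, y)).2 ^ 2) / 2 + h (t, x, y) * ((u α (t, x, y)).1 * px (fun p => (u α p).1) (t, x, y) + (u α (t, x, y)).2 * px (fun p => (u α p).2) (t, x, y))) + 2 * g * l α * h (t, x, y) * px h (t, x, y) + g * l α * (px h (t, x, y) * zb (x, y) + h (t, x, y) * px (fun p => zb (p.2.1, p.2.2)) (t, x, y))) * (u α (t, x, y)).1 + (l α * h (t, x, y) * ((u α (t, x, y)).1 ^ 2 + (u α (t, x, y)).2 ^ 2) / 2 + g * l α * h (t, x, y) ^ 2 + g * l α * h (t, x, y) * zb (x, y)) * px (fun p => (u α p).1) (t, x, y)) := by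
    show deriv (fun s => ∑ α ∈ Finset.Icc 1 N,
        (E α (t, s, y) + g / 2 * hlay α (t, s, y) * h (t, s, y)) * (u α (t, s, y)).1) x = _
    exact (HasDerivAt.fun_sum (fun α hα => HFx α hα)).deriv
  have gy : py (fun p => ∑ α ∈ Finset.Icc 1 N, (E α p + g / 2 * hlay α p * h p) * (u α p).2) (t, x, y)
      = ∑ α ∈ Finset.Icc 1 N, ((l α * (py h (t, x, y) * ((u α (t, x, y)).1 ^ 2 + (u α (t, x, y)).2 ^ 2) / 2 + h (t, x, y) * ((u α (t, x, y)).1 * py (fun p => (u α p).1) (t, x, y) + (u α (t, x, y)).2 * py (fun p => (u α p).2) (t, x, y))) + 2 * g * l α * h (t, x, y) * py h (t, x, y) + g * l α * (py h (t, x, y) * zb (x, y) + h (t, x, y) * py (fun p => zb (p.2.1, p.2.2)) (t, x, y))) * (u α (t, x, y)).2 + (l α * h (t, x, y) * ((u α (t, x, y)).1 ^ 2 + (u α (t, x, y)).2 ^ 2) / 2 + g * l α * h (t, x, y) ^ 2 + g * l α * h (t, x, y) * zb (x, y)) * py (fun p => (u α p).2) (t, x, y)) := by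
    show deriv (fun s => ∑ α ∈ Finset.Icc 1 N,
        (E α (t, x, s) + g / 2 * hlay α (t, x, s) * h (t, x, s)) * (u α (t, x, s)).2) y = _
    exact (HasDerivAt.fun_sum (fun α hα => HFy α hα)).deriv
  have hGv0 : G 0 (t, x, y) = 0 := by
    rw [hG]
    simp only [neg_eq_zero]
    refine Finset.sum_eq_zero fun j hj => ?_
    obtain ⟨hj1, hj2⟩ := Finset.mem_Icc.mp hj
    rw [Finset.Icc_eq_empty (by omega : ¬(1 : ℕ) ≤ 0), Finset.sum_empty,
      if_neg (by omega : ¬j ≤ 0)]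
    ring
  have hGvN : G N (t, x, y) = 0 := by
    rw [hG]
    simp only [neg_eq_zero]
    refine Finset.sum_eq_zero fun j hj => ?_
    obtain ⟨hj1, hj2⟩ := Finset.mem_Icc.mp hj
    rw [hlsum, if_pos hj2]
    ring
  have hGdiff : ∀ α ∈ Finset.Icc 1 N, G α (t, x, y) - G (α - 1) (t, x, y)
      = l α * (pt h (t, x, y) + px h (t, x, y) * (u α (t, x, y)).1 + h (t, x, y) * px (fun p => (u α p).1) (t, x, y) + py h (t, x, y) * (u α (t, x, y)).2 + h (t, x, y) * py (fun p => (u α p).2) (t, x, y)) := by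
    intro α hα
    obtain ⟨hα1, hαN⟩ := Finset.mem_Icc.mp hα
    obtain ⟨β, rfl⟩ : ∃ β, α = β + 1 := ⟨α - 1, by omega⟩
    simp only [Nat.add_sub_cancel]
    rw [hG, hG, neg_sub_neg, ← Finset.sum_sub_distrib]
    have step : ∀ j ∈ Finset.Icc 1 N,
        ((∑ p ∈ Finset.Icc 1 β, l p) - (if j ≤ β then (1 : ℝ) else 0)) * hdiv (fun p => hlay j p • u j p) (t, x, y)
          - ((∑ p ∈ Finset.Icc 1 (β + 1), l p) - (if j ≤ β + 1 then (1 : ℝ) else 0)) * hdiv (fun p => hlay j p • u j p) (t, x, y)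
        = (if j = β + 1 then hdiv (fun p => hlay j p • u j p) (t, x, y) else 0)
          - l (β + 1) * hdiv (fun p => hlay j p • u j p) (t, x, y) := by
      intro j hj
      rw [Finset.sum_Icc_succ_top (by omega : 1 ≤ β + 1)]
      by_cases h1 : j ≤ β
      · rw [if_pos h1, if_pos (by omega : j ≤ β + 1), if_neg (by omega : ¬j = β + 1)]
        ring
      · by_cases h2 : j = β + 1
        · rw [if_neg h1, if_pos (by omega : j ≤ β + 1), if_pos h2]
          ring
        · rw [if_neg h1, if_neg (by omega : ¬j ≤ β + 1), if_neg h2]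
          ring
    rw [Finset.sum_congr rfl step, Finset.sum_sub_distrib, ← Finset.mul_sum,
      Finset.sum_ite_eq' (Finset.Icc 1 N) (β + 1) (fun j => hdiv (fun p => hlay j p • u j p) (t, x, y)),
      if_pos hα, cD (β + 1) hα]
    have hm := hmass (t, x, y) hq
    linear_combination (-(l (β + 1))) * hm
  have key : ∀ α ∈ Finset.Icc 1 N, (l α * (pt h (t, x, y) * ((u α (t, x, y)).1 ^ 2 + (u α (t, x, y)).2 ^ 2) / 2 + h (t, x, y) * ((u α (t, x, y)).1 * pt (fun p => (u α p).1) (t, x, y) + (u α (t, x, y)).2 * pt (fun p => (u α p).2) (t, x, y))) + g * l α * h (t, x, y) * pt h (t, x, y) + g * l α * pt h (t, x, y) * zb (x, y)) + ((l α * (px h (t, x, y) * ((u α (t, x, y)).1 ^ 2 + (u α (t, x, y)).2 ^ 2) / 2 + h (t, x, y) * ((u α (t, x, y)).1 * px (fun p => (u α p).1) (t, x, y) + (u α (t, x, y)).2 * px (fun p => (u α p).2) (t, x, y))) + 2 * g * l α * h (t, x, y) * px h (t, x, y) + g * l α * (px h (t, x, y) * zb (x, y) + h (t, x, y) * px (fun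 p => zb (p.2.1, p.2.2)) (t, x, y))) * (u α (t, x, y)).1 + (l α * h (t, x, y) * ((u α (t, x, y)).1 ^ 2 + (u α (t, x, y)).2 ^ 2) / 2 + g * l α * h (t, x, y) ^ 2 + g * l α * h (t, x, y) * zb (x, y)) * px (fun p => (u α p).1) (t, x, y)) + ((l α * (py h (t, x, y) * ((u α (t, x, y)).1 ^ 2 + (u α (t, x, y)).2 ^ 2) / 2 + h (t, x, y) * ((u α (t, x, y)).1 * py (fun p => (u α p).1) (t, x, y) + (u α (t, x, y)).2 * py (fun p => (u α p).2) (t, x, y))) + 2 * g * l α * h (t, x, y) * py h (t, x, y) + g * l α * (py h (t, x, y) * zb (x, y) + h (t, x, y) * py (fun p => zb (p.2.1, p.2.2)) (t, x, y))) * (u α (t, x, y)).2 + (l α * h (t, x, y) * ((u α (t, x, y)).1 ^ 2 + (u α (t, x, y)).2 ^ 2) / 2 + g * l α * h (t, x, y) ^ 2 + g * l α * h (t, x, y) * zb (x, y)) * py (fun p => (u α p).2) (t, x, y))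
      = ((uh α (t, x, y)).1 * (u α (t, x, y)).1 + (uh α (t, x, y)).2 * (u α (t, x, y)).2 - ((u α (t, x, y)).1 ^ 2 + (u α (t, x, y)).2 ^ 2) / 2 + g * (h (t, x, y) + zb (x, y))) * G α (t, x, y) - ((uh (α - 1) (t, x, y)).1 * (u α (t, x, y)).1 + (uh (α - 1) (t, x, y)).2 * (u α (t, x, y)).2 - ((u α (t, x, y)).1 ^ 2 + (u α (t, x, y)).2 ^ 2) / 2 + g * (h (t, x, y) + zb (x, y))) * G (α - 1) (t, x, y) := by
    intro α hα
    have m1 := hmom1 α hα (t, x, y) hq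
    rw [c1 α hα, c2 α hα, c3 α hα, c4 α hα] at m1
    simp only [hlay_def] at m1
    have m2 := hmom2 α hα (t, x, y) hq
    rw [c5 α hα, c6 α hα, c7 α hα, c8 α hα] at m2
    simp only [hlay_def] at m2
    have hGd := hGdiff α hα
    linear_combination (u α (t, x, y)).1 * m1 + (u α (t, x, y)).2 * m2
      + (((u α (t, x, y)).1 ^ 2 + (u α (t, x, y)).2 ^ 2) / 2 - g * (h (t, x, y) + zb (x, y))) * hGd
  have hstep : ∀ α ∈ Finset.Icc 1 N,
      ((uh α (t, x, y)).1 * (u α (t, x, y)).1 + (uh α (t, x, y)).2 * (u α (t, x, y)).2 - ((u α (t, x, y)).1 ^ 2 + (u α (t, x, y)).2 ^ 2) / 2 + g * (h (t, x, y) + zb (x, y))) * G α (t, x, y) - ((uh (α - 1) (t, x, y)).1 * (u α (t, x, y)).1 + (uh (α - 1) (t, x, y)).2 * (u α (t, x, y)).2 - ((u α (t, x, y)).1 ^ 2 + (u α (t, x, y)).2 ^ 2) / 2 + g * (h (t, x, y) + zb (x, y))) * G (α - 1) (t, x, y)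
      = ((uh α (t, x, y)).1 * (u (α + 1) (t, x, y)).1 + (uh α (t, x, y)).2 * (u (α + 1) (t, x, y)).2 - ((u (α + 1) (t, x, y)).1 ^ 2 + (u (α + 1) (t, x, y)).2 ^ 2) / 2 + g * (h (t, x, y) + zb (x, y))) * G α (t, x, y) - ((uh (α - 1) (t, x, y)).1 * (u ((α - 1) + 1) (t, x, y)).1 + (uh (α - 1) (t, x, y)).2 * (u ((α - 1) + 1) (t, x, y)).2 - ((u ((α - 1) + 1) (t, x, y)).1 ^ 2 + (u ((α - 1) + 1) (t, x, y)).2 ^ 2) / 2 + g * (h (t, x, y) + zb (x, y))) * G (α - 1) (t, x, y) := by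
    intro α hα
    obtain ⟨hα1, hαN⟩ := Finset.mem_Icc.mp hα
    obtain ⟨β, rfl⟩ : ∃ β, α = β + 1 := ⟨α - 1, by omega⟩
    simp only [Nat.add_sub_cancel]
    by_cases hcase : β + 1 ≤ N - 1
    · have hmem2 : β + 1 ∈ Finset.Icc 1 (N - 1) := Finset.mem_Icc.mpr ⟨by omega, hcase⟩
      rw [huh (β + 1) hmem2 (t, x, y)]
      simp only [Prod.smul_fst, Prod.smul_snd, Prod.fst_add, Prod.snd_add, smul_eq_mul]
      ring
    · have hNeq : β + 1 = N := by omega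
      rw [hNeq, hGvN]
      ring
  have tele : ∑ α ∈ Finset.Icc 1 N,
      (((uh α (t, x, y)).1 * (u α (t, x, y)).1 + (uh α (t, x, y)).2 * (u α (t, x, y)).2 - ((u α (t, x, y)).1 ^ 2 + (u α (t, x, y)).2 ^ 2) / 2 + g * (h (t, x, y) + zb (x, y))) * G α (t, x, y) - ((uh (α - 1) (t, x, y)).1 * (u α (t, x, y)).1 + (uh (α - 1) (t, x, y)).2 * (u α (t, x, y)).2 - ((u α (t, x, y)).1 ^ 2 + (u α (t, x, y)).2 ^ 2) / 2 + g * (h (t, x, y) + zb (x, y))) * G (α - 1) (t, x, y)) = 0 := by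
    have htel := SWE_telescope (fun β => ((uh β (t, x, y)).1 * (u (β + 1) (t, x, y)).1 + (uh β (t, x, y)).2 * (u (β + 1) (t, x, y)).2 - ((u (β + 1) (t, x, y)).1 ^ 2 + (u (β + 1) (t, x, y)).2 ^ 2) / 2 + g * (h (t, x, y) + zb (x, y))) * G β (t, x, y)) N
    beta_reduce at htel
    rw [Finset.sum_congr rfl hstep, htel, hGvN, hGv0]
    ring
  have ex : (fun p : ℝ × ℝ × ℝ => (∑ α ∈ Finset.Icc 1 N, (E α p + g / 2 * hlay α p * h p) • u α p).1)
      = fun p => ∑ α ∈ Finset.Icc 1 N, (E α p + g / 2 * hlay α p * h p) * (u α p).1 := by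
    funext p
    rw [Prod.fst_sum]
    exact Finset.sum_congr rfl fun α _ => by rw [Prod.smul_fst, smul_eq_mul]
  have ey : (fun p : ℝ × ℝ × ℝ => (∑ α ∈ Finset.Icc 1 N, (E α p + g / 2 * hlay α p * h p) • u α p).2)
      = fun p => ∑ α ∈ Finset.Icc 1 N, (E α p + g / 2 * hlay α p * h p) * (u α p).2 := by
    funext p
    rw [Prod.snd_sum]
    exact Finset.sum_congr rfl fun α _ => by rw [Prod.smul_snd, smul_eq_mul]
  have hd2 : hdiv (fun p => ∑ α ∈ Finset.Icc 1 N, (E α p + g / 2 * hlay α p * h p) • u α p) (t, x, y)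
      = (∑ α ∈ Finset.Icc 1 N, ((l α * (px h (t, x, y) * ((u α (t, x, y)).1 ^ 2 + (u α (t, x, y)).2 ^ 2) / 2 + h (t, x, y) * ((u α (t, x, y)).1 * px (fun p => (u α p).1) (t, x, y) + (u α (t, x, y)).2 * px (fun p => (u α p).2) (t, x, y))) + 2 * g * l α * h (t, x, y) * px h (t, x, y) + g * l α * (px h (t, x, y) * zb (x, y) + h (t, x, y) * px (fun p => zb (p.2.1, p.2.2)) (t, x, y))) * (u α (t, x, y)).1 + (l α * h (t, x, y) * ((u α (t, x, y)).1 ^ 2 + (u α (t, x, y)).2 ^ 2) / 2 + g * l α * h (t, x, y) ^ 2 + g * l α * h (t, x, y) * zb (x, y)) * px (fun p => (u α p).1) (t, x, y))) + (∑ α ∈ Finset.Icc 1 N, ((l α * (py h (t, x, y) * ((u α (t, x, y)).1 ^ 2 + (u α (t, x, y)).2 ^ 2) / 2 + h (t, x, y) * ((u α (t, x, y)).1 * py (fun p => (u α p).1) (t, x, y) + (u α (t, x, y)).2 * py (fun p => (u α p).2) (t, x, y))) + 2 * g * l α * h (t, x, y) * py h (t, x, y) + g * l α * (py h (t, x, y)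 * zb (x, y) + h (t, x, y) * py (fun p => zb (p.2.1, p.2.2)) (t, x, y))) * (u α (t, x, y)).2 + (l α * h (t, x, y) * ((u α (t, x, y)).1 ^ 2 + (u α (t, x, y)).2 ^ 2) / 2 + g * l α * h (t, x, y) ^ 2 + g * l α * h (t, x, y) * zb (x, y)) * py (fun p => (u α p).2) (t, x, y))) := by
    show px (fun p => (∑ α ∈ Finset.Icc 1 N, (E α p + g / 2 * hlay α p * h p) • u α p).1) (t, x, y)
        + py (fun p => (∑ α ∈ Finset.Icc 1 N, (E α p + g / 2 * hlay α p * h p) • u α p).2) (t, x, y) = _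
    rw [ex, ey, gx, gy]
  rw [gt, hd2]
  have hsum := Finset.sum_congr rfl key
  rw [Finset.sum_add_distrib, Finset.sum_add_distrib] at hsum
  linarith [hsum, tele]
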